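/- Let λ, τ > 0 and μ, σ ∈ ℝ. For ρ > 0 define h₂(ρ) = 1 + ρλ/2 − √(ρ²λ²/4 + ρλ + τλ), h₁(ρ) = −(μ/(ρ+τ))·((1 + ρλ)h₂(ρ) − (1 − τλ)), and h₀(ρ) = (1/ρ)·{ [σ²/2 + (ρμ²/(ρ+τ)²)·(1 + ρλ)²/2 ]·h₂(ρ) + (μ²/(ρ+τ)²)(1 − λτ)(τ/2 − ρ²λ/2) }. Then for every z ∈ ℝ, lim_{ρ→0⁺} ρ·(½h₂(ρ)z² + h₁(ρ)z + h₀(ρ)) = (σ²/2)(1 − √(λτ)) + (μ²/(2τ))(1 − λτ); in particular the limit is independent of z. -/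

import Mathlib

open Filter

/-- the vanishing-discount limit of the discounted value function.
With the explicit coefficients `h₂(ρ), h₁(ρ), h₀(ρ)` of the discounted problem,
for every `z`, `ρ·(½h₂(ρ)z² + h₁(ρ)z + h₀(ρ)) → (σ²/2)(1 − √(λτ)) + (μ²/(2τ))(1 − λτ)`
as `ρ → 0⁺`; in particular the limit is independent of `z`. -/
theorem stmt19 (lam τ μ σ : ℝ) (hlam : 0 < lam) (hτ : 0 < τ) :
    let h₂ : ℝ → ℝ := fun ρ =>
      1 + ρ * lam / 2 - Real.sqrt (ρ ^ 2 * lam ^ 2 / 4 + ρ * lam + τ * lam)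
    let h₁ : ℝ → ℝ := fun ρ =>
      -(μ / (ρ + τ)) * ((1 + ρ * lam) * h₂ ρ - (1 - τ * lam))
    let h₀ : ℝ → ℝ := fun ρ =>
      (1 / ρ) * ((σ ^ 2 / 2 + ρ * μ ^ 2 / (ρ + τ) ^ 2 * (1 + ρ * lam) ^ 2 / 2) * h₂ ρ
        + μ ^ 2 / (ρ + τ) ^ 2 * (1 - lam * τ) * (τ / 2 - ρ ^ 2 * lam / 2))
    ∀ z : ℝ,
      Tendsto (fun ρ => ρ * ((1 / 2) * h₂ ρ * z ^ 2 + h₁ ρ * z + h₀ ρ))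
        (nhdsWithin 0 (Set.Ioi 0))
        (nhds (σ ^ 2 / 2 * (1 - Real.sqrt (lam * τ))
                + μ ^ 2 / (2 * τ) * (1 - lam * τ))) := by
  intro h₂ h₁ h₀ z
  have hτ' : τ ≠ 0 := ne_of_gt hτ
  set G : ℝ → ℝ := fun ρ =>
    ρ * ((1 / 2) * h₂ ρ * z ^ 2 + h₁ ρ * z)
      + ((σ ^ 2 / 2 + ρ * μ ^ 2 / (ρ + τ) ^ 2 * (1 + ρ * lam) ^ 2 / 2) * h₂ ρ
        + μ ^ 2 / (ρ + τ) ^ 2 * (1 - lam * τ) * (τ / 2 - ρ ^ 2 * lam / 2)) with hG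
  have hc2 : ContinuousAt h₂ 0 := by
    simp only [h₂]
    fun_prop
  have hc1 : ContinuousAt h₁ 0 := by
    simp only [h₁]
    apply ContinuousAt.mul
    · apply ContinuousAt.neg
      apply ContinuousAt.div continuousAt_const (by fun_prop)
      simpa using hτ'
    · exact ((continuousAt_const.add (by fun_prop)).mul hc2).sub continuousAt_const
  have hden : ContinuousAt (fun ρ : ℝ => μ ^ 2 / (ρ + τ) ^ 2) 0 := by
    apply ContinuousAt.div continuousAt_const (by fun_prop)
    simp [hτ']
  have hA : ContinuousAt (fun ρ : ℝ => ρ * μ ^ 2 / (ρ + τ) ^ 2) 0 := by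
    apply ContinuousAt.div (by fun_prop) (by fun_prop)
    simp [hτ']
  have hB : ContinuousAt (fun ρ : ℝ => (1 + ρ * lam) ^ 2) 0 := by fun_prop
  have hC : ContinuousAt (fun ρ : ℝ => τ / 2 - ρ ^ 2 * lam / 2) 0 := by fun_prop
  have hcG : ContinuousAt G 0 := by
    apply ContinuousAt.add
    · exact continuousAt_id.mul (((continuousAt_const.mul hc2).mul continuousAt_const).add
        (hc1.mul continuousAt_const))
    · exact ((continuousAt_const.add ((hA.mul hB).div_const 2)).mul hc2).add
        ((hden.mul continuousAt_const).mul hC)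
  have hG0 : G 0 = σ ^ 2 / 2 * (1 - Real.sqrt (lam * τ))
      + μ ^ 2 / (2 * τ) * (1 - lam * τ) := by
    have h20 : h₂ 0 = 1 - Real.sqrt (lam * τ) := by
      simp [h₂, mul_comm τ lam]
    simp only [hG, h20]
    field_simp
    ring
  have hTG : Tendsto G (nhdsWithin 0 (Set.Ioi 0))
      (nhds (σ ^ 2 / 2 * (1 - Real.sqrt (lam * τ)) + μ ^ 2 / (2 * τ) * (1 - lam * τ))) := by
    rw [← hG0]
    exact hcG.continuousWithinAt.tendsto
  refine hTG.congr' ?_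
  filter_upwards [self_mem_nhdsWithin] with ρ hρ
  have hρ0 : ρ ≠ 0 := ne_of_gt (Set.mem_Ioi.mp hρ)
  simp only [hG, h₀]
  field_simp
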